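/- Define f : [0,1] → ℝ by f(x) = x for x ∈ ℚ ∩ [0,1), f(x) = x − 1 for irrational x ∈ [0,1], and f(1) = 0. Then: (i) f is 2-continuous (it is continuous on ℚ ∩ [0,1) and on its complement in [0,1]); but (ii) the induced function f̃ on the circle ℝ/ℤ (with the quotient topology), defined by f̃(x mod 1) = f(x) for x ∈ [0,1), is well defined and is NOT 2-continuous: for every two sets D_1, D_2 covering the circle, the restriction of f̃ to at least one of D_1, D_2 is discontinuous. -/

import Mathlib

open scoped Classical

open Set

/-- The "winding number discrepancy": for the lifted function `F x = g (↑x)` one has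
`F x = x + nfun x`. -/
private noncomputable def nfun (x : ℝ) : ℤ :=
  if Irrational x then -⌊x⌋ - 1 else -⌊x⌋

private lemma irr_one_sub {x : ℝ} : Irrational (1 - x) ↔ Irrational x := by
  constructor
  · intro h
    simpa [sub_sub_cancel] using h.intCast_sub 1
  · intro h
    simpa using h.intCast_sub 1

private lemma nfun_Ioo01 {x : ℝ} (hx : x ∈ Ioo (0:ℝ) 1) :
    nfun x = if Irrational x then -1 else 0 := by
  have hf : ⌊x⌋ = 0 := Int.floor_eq_zero_iff.2 ⟨hx.1.le, hx.2⟩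
  unfold nfun
  rw [hf]
  split <;> simp

private lemma nfun_one : nfun 1 = -1 := by
  unfold nfun
  rw [if_neg not_irrational_one]
  norm_num

private lemma nfun_irr_iff {x y : ℝ} (hx : x ∈ Ioo (0:ℝ) 1) (hy : y ∈ Ioo (0:ℝ) 1)
    (h : nfun y = nfun x) : (Irrational y ↔ Irrational x) := by
  rw [nfun_Ioo01 hx, nfun_Ioo01 hy] at h
  by_cases h1 : Irrational y <;> by_cases h2 : Irrational x <;>
    simp [h1, h2] at h ⊢

/-- Key propagation lemma: if on some subinterval of `(0,1)` the set `P` consists exactly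
of the irrationals and `Q` exactly of the rationals, this configuration propagates
rightwards to all of `(a, 1)`. -/
private lemma extend_config (P Q : Set ℝ)
    (hcov : ∀ x ∈ Ioo (0:ℝ) 1, x ∈ P ∨ x ∈ Q)
    (hP : ∀ x ∈ P ∩ Ioo (0:ℝ) 1, ∃ δ > 0, ∀ y ∈ P ∩ Ioo (0:ℝ) 1,
      |y - x| < δ → (Irrational y ↔ Irrational x))
    (hQ : ∀ x ∈ Q ∩ Ioo (0:ℝ) 1, ∃ δ > 0, ∀ y ∈ Q ∩ Ioo (0:ℝ) 1,
      |y - x| < δ → (Irrational y ↔ Irrational x))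
    (a b : ℝ) (ha : 0 ≤ a) (hab : a < b) (hb : b ≤ 1)
    (hconf : ∀ x ∈ Ioo a b, (x ∈ P ↔ Irrational x) ∧ (x ∈ Q ↔ ¬ Irrational x)) :
    ∀ x ∈ Ioo a 1, (x ∈ P ↔ Irrational x) ∧ (x ∈ Q ↔ ¬ Irrational x) := by
  set C : ℝ → Prop := fun x => (x ∈ P ↔ Irrational x) ∧ (x ∈ Q ↔ ¬ Irrational x) with hC
  -- the step: a configuration on `(a, c)` with `a < c < 1` extends a bit past `c`.
  have step : ∀ c, a < c → c < 1 → (∀ x ∈ Ioo a c, C x) →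
      ∃ δ > 0, ∀ x ∈ Ioo a (c + δ), x < 1 → C x := by
    intro c hac hc1 hcC
    have hc0 : (0:ℝ) < c := lt_of_le_of_lt ha hac
    have hcIoo : c ∈ Ioo (0:ℝ) 1 := ⟨hc0, hc1⟩
    by_cases hirr : Irrational c
    · -- c irrational: c ∉ Q, c ∈ P; the ball from `hP` works.
      have hcQ : c ∉ Q := by
        intro hcQ
        obtain ⟨δ, hδ, h⟩ := hQ c ⟨hcQ, hcIoo⟩
        obtain ⟨q, hq1, hq2⟩ := exists_rat_btwn (show max a (c - δ) < c by
          rw [max_lt_iff]; exact ⟨hac, by linarith⟩)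
        have hqa : a < (q:ℝ) := lt_of_le_of_lt (le_max_left _ _) hq1
        have hqδ : c - δ < (q:ℝ) := lt_of_le_of_lt (le_max_right _ _) hq1
        have hqC := hcC q ⟨hqa, hq2⟩
        have hqQ : (q:ℝ) ∈ Q := hqC.2.2 (Rat.not_irrational q)
        have := (h q ⟨hqQ, ⟨lt_of_le_of_lt ha hqa, hq2.trans hc1⟩⟩
          (by rw [abs_sub_lt_iff]; constructor <;> linarith)).2 hirr
        exact Rat.not_irrational q this
      have hcP : c ∈ P := (hcov c hcIoo).resolve_right hcQ
      obtain ⟨δ, hδpos, hδ⟩ := hP c ⟨hcP, hcIoo⟩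
      refine ⟨δ, hδpos, ?_⟩
      intro x hx hx1
      rcases lt_trichotomy x c with h | h | h
      · exact hcC x ⟨hx.1, h⟩
      · subst h
        exact ⟨iff_of_true hcP hirr, iff_of_false hcQ (not_not_intro hirr)⟩
      · have hx0 : (0:ℝ) < x := hc0.trans h
        have hxIoo : x ∈ Ioo (0:ℝ) 1 := ⟨hx0, hx1⟩
        have hdist : |x - c| < δ := by
          rw [abs_sub_lt_iff]
          constructor <;> [linarith [hx.2]; linarith]
        -- rationals just right of c are not in P
        by_cases hxr : Irrational x
        · -- irrational x: x ∉ Q, x ∈ P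
          have hxQ : x ∉ Q := by
            intro hxQ
            obtain ⟨δ₂, hδ₂, h₂⟩ := hQ x ⟨hxQ, hxIoo⟩
            obtain ⟨q, hq1, hq2⟩ := exists_rat_btwn (show max c (x - δ₂) < x by
              rw [max_lt_iff]; exact ⟨h, by linarith⟩)
            have hqc : c < (q:ℝ) := lt_of_le_of_lt (le_max_left _ _) hq1
            have hqδ₂ : x - δ₂ < (q:ℝ) := lt_of_le_of_lt (le_max_right _ _) hq1
            have hqIoo : (q:ℝ) ∈ Ioo (0:ℝ) 1 := ⟨hc0.trans hqc, hq2.trans hx1⟩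
            -- q ∉ P since anything in P this close to c is irrational
            have hqP : (q:ℝ) ∉ P := by
              intro hqP
              have hd : |(q:ℝ) - c| < δ := by
                rw [abs_sub_lt_iff]; constructor <;> linarith [hx.2]
              exact Rat.not_irrational q ((hδ q ⟨hqP, hqIoo⟩ hd).mpr hirr)
            have hqQ : (q:ℝ) ∈ Q := (hcov q hqIoo).resolve_left hqP
            have hd : |(q:ℝ) - x| < δ₂ := by
              rw [abs_sub_lt_iff]; constructor <;> linarith
            have := (h₂ q ⟨hqQ, hqIoo⟩ hd).2 hxr
            exact Rat.not_irrational q this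
          exact ⟨iff_of_true ((hcov x hxIoo).resolve_right hxQ) hxr,
            iff_of_false hxQ (not_not_intro hxr)⟩
        · -- rational x : x ∉ P, x ∈ Q
          have hxP : x ∉ P := by
            intro hxP
            exact hxr ((hδ x ⟨hxP, hxIoo⟩ hdist).mpr hirr)
          exact ⟨iff_of_false hxP hxr,
            iff_of_true ((hcov x hxIoo).resolve_left hxP) hxr⟩
    · -- c rational: c ∉ P, c ∈ Q; the ball from `hQ` works.
      have hcP : c ∉ P := by
        intro hcP
        obtain ⟨δ, hδ, h⟩ := hP c ⟨hcP, hcIoo⟩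
        obtain ⟨w, hw, hw1, hw2⟩ := exists_irrational_btwn (show max a (c - δ) < c by
          rw [max_lt_iff]; exact ⟨hac, by linarith⟩)
        have hwa : a < w := lt_of_le_of_lt (le_max_left _ _) hw1
        have hwδ : c - δ < w := lt_of_le_of_lt (le_max_right _ _) hw1
        have hwC := hcC w ⟨hwa, hw2⟩
        have hwP : w ∈ P := hwC.1.2 hw
        exact hirr ((h w ⟨hwP, ⟨lt_of_le_of_lt ha hwa, hw2.trans hc1⟩⟩
          (by rw [abs_sub_lt_iff]; constructor <;> linarith)).1 hw)
      have hcQ : c ∈ Q := (hcov c hcIoo).resolve_left hcP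
      obtain ⟨δ, hδpos, hδ⟩ := hQ c ⟨hcQ, hcIoo⟩
      refine ⟨δ, hδpos, ?_⟩
      intro x hx hx1
      rcases lt_trichotomy x c with h | h | h
      · exact hcC x ⟨hx.1, h⟩
      · subst h
        exact ⟨iff_of_false hcP hirr, iff_of_true hcQ hirr⟩
      · have hx0 : (0:ℝ) < x := hc0.trans h
        have hxIoo : x ∈ Ioo (0:ℝ) 1 := ⟨hx0, hx1⟩
        have hdist : |x - c| < δ := by
          rw [abs_sub_lt_iff]
          constructor <;> [linarith [hx.2]; linarith]
        by_cases hxr : Irrational x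
        · -- irrational x : x ∉ Q, x ∈ P
          have hxQ : x ∉ Q := by
            intro hxQ
            exact hirr ((hδ x ⟨hxQ, hxIoo⟩ hdist).mp hxr)
          exact ⟨iff_of_true ((hcov x hxIoo).resolve_right hxQ) hxr,
            iff_of_false hxQ (not_not_intro hxr)⟩
        · -- rational x : x ∉ P, x ∈ Q
          have hxP : x ∉ P := by
            intro hxP
            obtain ⟨δ₂, hδ₂, h₂⟩ := hP x ⟨hxP, hxIoo⟩
            obtain ⟨w, hw, hw1, hw2⟩ := exists_irrational_btwn (show max c (x - δ₂) < x by
              rw [max_lt_iff]; exact ⟨h, by linarith⟩)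
            have hwc : c < w := lt_of_le_of_lt (le_max_left _ _) hw1
            have hwδ₂ : x - δ₂ < w := lt_of_le_of_lt (le_max_right _ _) hw1
            have hwIoo : w ∈ Ioo (0:ℝ) 1 := ⟨hc0.trans hwc, hw2.trans hx1⟩
            have hwQ : w ∉ Q := by
              intro hwQ
              have hd : |w - c| < δ := by
                rw [abs_sub_lt_iff]; constructor <;> linarith [hx.2]
              exact hirr ((hδ w ⟨hwQ, hwIoo⟩ hd).mp hw)
            have hwP : w ∈ P := (hcov w hwIoo).resolve_right hwQ
            have hd : |w - x| < δ₂ := by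
              rw [abs_sub_lt_iff]; constructor <;> linarith
            exact hxr ((h₂ w ⟨hwP, hwIoo⟩ hd).mp hw)
          exact ⟨iff_of_false hxP hxr,
            iff_of_true ((hcov x hxIoo).resolve_left hxP) hxr⟩
  -- now a sup argument
  set T : Set ℝ := {t | t ∈ Icc b 1 ∧ ∀ x ∈ Ioo a t, C x} with hT
  have hbT : b ∈ T := ⟨⟨le_refl b, hb⟩, hconf⟩
  have hbdd : BddAbove T := ⟨1, fun t ht => ht.1.2⟩
  set c := sSup T with hc
  have hbc : b ≤ c := le_csSup hbdd hbT
  have hc1 : c ≤ 1 := csSup_le ⟨b, hbT⟩ fun t ht => ht.1.2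
  have hCac : ∀ x ∈ Ioo a c, C x := by
    intro x hx
    obtain ⟨t, htT, hxt⟩ := exists_lt_of_lt_csSup ⟨b, hbT⟩ hx.2
    exact htT.2 x ⟨hx.1, hxt⟩
  rcases eq_or_lt_of_le hc1 with h1 | h1
  · rw [h1] at hCac; exact hCac
  · exfalso
    obtain ⟨δ, hδpos, hδ⟩ := step c (hab.trans_le hbc) h1 hCac
    set t := min (c + δ) 1 with ht'
    have hct : c < t := lt_min (by linarith) h1
    have htT : t ∈ T := by
      refine ⟨⟨hbc.trans hct.le, min_le_right _ _⟩, ?_⟩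
      intro x hx
      exact hδ x ⟨hx.1, hx.2.trans_le (min_le_left _ _)⟩ (hx.2.trans_le (min_le_right _ _))
    exact absurd (le_csSup hbdd htT) (not_le.2 hct)


private lemma main_contra (P Q : Set ℝ)
    (hcov : ∀ x : ℝ, x ∈ P ∨ x ∈ Q)
    (hper : ∀ x : ℝ, x ∈ P → x + 1 ∈ P)
    (hlocP : ∀ x ∈ P, ∃ δ > 0, ∀ y ∈ P, |y - x| < δ → nfun y = nfun x)
    (hlocQ : ∀ x ∈ Q, ∃ δ > 0, ∀ y ∈ Q, |y - x| < δ → nfun y = nfun x)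
    (hy₀ : Real.sqrt 2 / 2 ∈ P) : False := by
  set y₀ : ℝ := Real.sqrt 2 / 2 with hy₀def
  have hy0irr : Irrational y₀ := by
    have : Irrational (Real.sqrt 2 / ((2:ℕ):ℝ)) := irrational_sqrt_two.div_natCast two_ne_zero
    simpa using this
  have hs2 : (0:ℝ) < Real.sqrt 2 := Real.sqrt_pos.2 (by norm_num)
  have hs2' : Real.sqrt 2 < 2 := by
    nlinarith [Real.sq_sqrt (show (0:ℝ) ≤ 2 by norm_num), hs2]
  have h0y : (0:ℝ) < y₀ := by rw [hy₀def]; linarith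
  have hy1 : y₀ < 1 := by rw [hy₀def]; linarith
  -- general: members of P, Q in (0,1) have irrationality forced locally
  have hPiff : ∀ x ∈ P ∩ Ioo (0:ℝ) 1, ∃ δ > 0, ∀ y ∈ P ∩ Ioo (0:ℝ) 1,
      |y - x| < δ → (Irrational y ↔ Irrational x) := by
    intro x hx
    obtain ⟨δ, hδpos, hδ⟩ := hlocP x hx.1
    exact ⟨δ, hδpos, fun y hy hd => nfun_irr_iff hx.2 hy.2 (hδ y hy.1 hd)⟩
  have hQiff : ∀ x ∈ Q ∩ Ioo (0:ℝ) 1, ∃ δ > 0, ∀ y ∈ Q ∩ Ioo (0:ℝ) 1,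
      |y - x| < δ → (Irrational y ↔ Irrational x) := by
    intro x hx
    obtain ⟨δ, hδpos, hδ⟩ := hlocQ x hx.1
    exact ⟨δ, hδpos, fun y hy hd => nfun_irr_iff hx.2 hy.2 (hδ y hy.1 hd)⟩
  -- construct the starting configuration interval
  obtain ⟨δ₀, hδ₀pos, hδ₀⟩ := hlocP y₀ hy₀
  set δ : ℝ := min δ₀ (min y₀ (1 - y₀)) with hδdef
  have hδpos : 0 < δ := by
    apply lt_min hδ₀pos (lt_min h0y (by linarith))
  have hδy : δ ≤ y₀ := (min_le_right _ _).trans (min_le_left _ _)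
  have hδy' : δ ≤ 1 - y₀ := (min_le_right _ _).trans (min_le_right _ _)
  have hδδ₀ : δ ≤ δ₀ := min_le_left _ _
  have hball : ∀ z : ℝ, |z - y₀| < δ → z ∈ Ioo (0:ℝ) 1 := by
    intro z hz
    rw [abs_sub_lt_iff] at hz
    exact ⟨by linarith, by linarith⟩
  have hPirrB : ∀ z ∈ P, |z - y₀| < δ → Irrational z := by
    intro z hz hd
    have h1 : nfun z = nfun y₀ := hδ₀ z hz (hd.trans_le hδδ₀)
    rw [nfun_Ioo01 (hball z hd), nfun_Ioo01 ⟨h0y, hy1⟩, if_pos hy0irr] at h1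
    by_contra hc
    rw [if_neg hc] at h1
    exact absurd h1 (by norm_num)
  obtain ⟨q, hq1, hq2⟩ := exists_rat_btwn (show y₀ - δ < y₀ by linarith)
  have hqd : |(q:ℝ) - y₀| < δ := by rw [abs_sub_lt_iff]; constructor <;> linarith
  have hqP : (q:ℝ) ∉ P := fun h => Rat.not_irrational q (hPirrB q h hqd)
  have hqQ : (q:ℝ) ∈ Q := (hcov q).resolve_left hqP
  obtain ⟨δ₁, hδ₁pos, hδ₁⟩ := hlocQ q hqQ
  set e : ℝ := y₀ - (q:ℝ) with hedef
  have he0 : 0 < e := by rw [hedef]; linarith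
  have heδ : e < δ := by rw [hedef]; linarith
  set δ' : ℝ := min δ₁ (δ - e) with hδ'def
  have hδ'pos : 0 < δ' := lt_min hδ₁pos (by linarith)
  have hδ'1 : δ' ≤ δ₁ := min_le_left _ _
  have hδ'2 : δ' ≤ δ - e := min_le_right _ _
  have hsub : ∀ z : ℝ, |z - (q:ℝ)| < δ' → |z - y₀| < δ := by
    intro z hz
    rw [abs_sub_lt_iff] at hz ⊢
    constructor <;> [linarith; linarith]
  have hQratB : ∀ z ∈ Q, |z - (q:ℝ)| < δ' → ¬ Irrational z := by
    intro z hz hd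
    have h1 : nfun z = nfun q := hδ₁ z hz (hd.trans_le hδ'1)
    rw [nfun_Ioo01 (hball z (hsub z hd)), nfun_Ioo01 (hball q hqd),
      if_neg (Rat.not_irrational q)] at h1
    intro hc
    rw [if_pos hc] at h1
    exact absurd h1 (by norm_num)
  set a : ℝ := (q:ℝ) - δ' / 2 with hadef
  set b : ℝ := (q:ℝ) + δ' / 2 with hbdef
  have hconf : ∀ x ∈ Ioo a b, (x ∈ P ↔ Irrational x) ∧ (x ∈ Q ↔ ¬ Irrational x) := by
    intro x hx
    have hxq : |x - (q:ℝ)| < δ' := by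
      rw [abs_sub_lt_iff]
      rw [hadef] at hx; rw [hbdef] at hx
      constructor <;> [linarith [hx.1, hx.2]; linarith [hx.1, hx.2]]
    have hxy : |x - y₀| < δ := hsub x hxq
    constructor
    · constructor
      · intro hxP; exact hPirrB x hxP hxy
      · intro hxirr
        have : x ∉ Q := fun h => (hQratB x h hxq) hxirr
        exact (hcov x).resolve_right this
    · constructor
      · intro hxQ; exact hQratB x hxQ hxq
      · intro hxrat
        have : x ∉ P := fun h => hxrat (hPirrB x h hxy)
        exact (hcov x).resolve_left this
  have ha0 : 0 ≤ a := by
    rw [hadef]; rw [hedef] at hδ'2; linarith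
  have hab : a < b := by rw [hadef, hbdef]; linarith
  have hb1 : b ≤ 1 := by
    rw [hbdef]; rw [hedef] at hδ'2; linarith
  -- extend upwards
  have hup := extend_config P Q (fun x _ => hcov x) hPiff hQiff a b ha0 hab hb1 hconf
  -- extend downwards via reflection
  have hdown : ∀ x ∈ Ioo (0:ℝ) b, (x ∈ P ↔ Irrational x) ∧ (x ∈ Q ↔ ¬ Irrational x) := by
    set P' : Set ℝ := {x | 1 - x ∈ P} with hP'def
    set Q' : Set ℝ := {x | 1 - x ∈ Q} with hQ'def
    have hrefl : ∀ x : ℝ, x ∈ Ioo (0:ℝ) 1 → (1 - x) ∈ Ioo (0:ℝ) 1 := by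
      intro x hx; exact ⟨by linarith [hx.2], by linarith [hx.1]⟩
    have hP'iff : ∀ x ∈ P' ∩ Ioo (0:ℝ) 1, ∃ δ > 0, ∀ y ∈ P' ∩ Ioo (0:ℝ) 1,
        |y - x| < δ → (Irrational y ↔ Irrational x) := by
      intro x hx
      obtain ⟨δ₂, hδ₂pos, hδ₂⟩ := hPiff (1 - x) ⟨hx.1, hrefl x hx.2⟩
      refine ⟨δ₂, hδ₂pos, ?_⟩
      intro y hy hd
      have hd' : |1 - y - (1 - x)| < δ₂ := by
        rw [show (1:ℝ) - y - (1 - x) = -(y - x) by ring, abs_neg]; exact hd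
      have := hδ₂ (1 - y) ⟨hy.1, hrefl y hy.2⟩ hd'
      rw [irr_one_sub, irr_one_sub] at this
      exact this
    have hQ'iff : ∀ x ∈ Q' ∩ Ioo (0:ℝ) 1, ∃ δ > 0, ∀ y ∈ Q' ∩ Ioo (0:ℝ) 1,
        |y - x| < δ → (Irrational y ↔ Irrational x) := by
      intro x hx
      obtain ⟨δ₂, hδ₂pos, hδ₂⟩ := hQiff (1 - x) ⟨hx.1, hrefl x hx.2⟩
      refine ⟨δ₂, hδ₂pos, ?_⟩
      intro y hy hd
      have hd' : |1 - y - (1 - x)| < δ₂ := by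
        rw [show (1:ℝ) - y - (1 - x) = -(y - x) by ring, abs_neg]; exact hd
      have := hδ₂ (1 - y) ⟨hy.1, hrefl y hy.2⟩ hd'
      rw [irr_one_sub, irr_one_sub] at this
      exact this
    have hconf' : ∀ x ∈ Ioo (1 - b) (1 - a),
        (x ∈ P' ↔ Irrational x) ∧ (x ∈ Q' ↔ ¬ Irrational x) := by
      intro x hx
      have h1 : 1 - x ∈ Ioo a b := ⟨by linarith [hx.2], by linarith [hx.1]⟩
      have h2 := hconf (1 - x) h1
      constructor
      · rw [show (x ∈ P') = (1 - x ∈ P) from rfl, h2.1, irr_one_sub]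
      · rw [show (x ∈ Q') = (1 - x ∈ Q) from rfl, h2.2, irr_one_sub]
    have hcov' : ∀ x ∈ Ioo (0:ℝ) 1, x ∈ P' ∨ x ∈ Q' := fun x _ => hcov (1 - x)
    have hext := extend_config P' Q' hcov' hP'iff hQ'iff (1 - b) (1 - a)
      (by linarith) (by linarith) (by linarith) hconf'
    intro x hx
    have h1 : 1 - x ∈ Ioo (1 - b) 1 := ⟨by linarith [hx.2], by linarith [hx.1]⟩
    have h2 := hext (1 - x) h1
    have e1 : (1 - x ∈ P') = (x ∈ P) := by
      show ((1:ℝ) - (1 - x) ∈ P) = (x ∈ P)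
      rw [sub_sub_cancel]
    have e2 : (1 - x ∈ Q') = (x ∈ Q) := by
      show ((1:ℝ) - (1 - x) ∈ Q) = (x ∈ Q)
      rw [sub_sub_cancel]
    rw [e1, e2, irr_one_sub] at h2
    exact h2
  have hfull : ∀ x ∈ Ioo (0:ℝ) 1, (x ∈ P ↔ Irrational x) ∧ (x ∈ Q ↔ ¬ Irrational x) := by
    intro x hx
    rcases lt_or_ge x b with h | h
    · exact hdown x ⟨hx.1, h⟩
    · exact hup x ⟨lt_of_lt_of_le hab h, hx.2⟩
  -- final contradiction at the point 1
  rcases hcov 1 with h1P | h1Q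
  · obtain ⟨δ₂, hδ₂pos, hδ₂⟩ := hlocP 1 h1P
    obtain ⟨u, hu, hu1, hu2⟩ := exists_irrational_btwn (show (0:ℝ) < min δ₂ 1 by
      exact lt_min hδ₂pos one_pos)
    have huIoo : u ∈ Ioo (0:ℝ) 1 := ⟨hu1, hu2.trans_le (min_le_right _ _)⟩
    have huP : u ∈ P := (hfull u huIoo).1.mpr hu
    have hwP : u + 1 ∈ P := hper u huP
    have hd : |u + 1 - 1| < δ₂ := by
      rw [show u + 1 - 1 = u by ring, abs_of_pos hu1]
      exact hu2.trans_le (min_le_left _ _)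
    have hval := hδ₂ (u + 1) hwP hd
    rw [nfun_one] at hval
    have hwirr : Irrational (u + 1) := by simpa using hu.add_intCast 1
    have hfl : ⌊u + 1⌋ = 1 := by
      have : ⌊u⌋ = 0 := Int.floor_eq_zero_iff.2 ⟨hu1.le, huIoo.2⟩
      rw [show u + 1 = u + ((1:ℤ):ℝ) by norm_num, Int.floor_add_intCast, this]
      norm_num
    unfold nfun at hval
    rw [if_pos hwirr, hfl] at hval
    omega
  · obtain ⟨δ₂, hδ₂pos, hδ₂⟩ := hlocQ 1 h1Q
    obtain ⟨r, hr1, hr2⟩ := exists_rat_btwn (show max (1 - δ₂) 0 < 1 by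
      rw [max_lt_iff]; exact ⟨by linarith, one_pos⟩)
    have hr0 : (0:ℝ) < r := lt_of_le_of_lt (le_max_right _ _) hr1
    have hrδ : 1 - δ₂ < (r:ℝ) := lt_of_le_of_lt (le_max_left _ _) hr1
    have hrIoo : (r:ℝ) ∈ Ioo (0:ℝ) 1 := ⟨hr0, hr2⟩
    have hrQ : (r:ℝ) ∈ Q := (hfull r hrIoo).2.mpr (Rat.not_irrational r)
    have hd : |(r:ℝ) - 1| < δ₂ := by rw [abs_sub_lt_iff]; constructor <;> linarith
    have hval := hδ₂ r hrQ hd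
    rw [nfun_one, nfun_Ioo01 hrIoo, if_neg (Rat.not_irrational r)] at hval
    exact absurd hval (by norm_num)

theorem two_continuity_lost_on_circle :
    letI f : ℝ → ℝ := fun x => if Irrational x then x - 1 else if x = 1 then 0 else x
    (∃ D : Fin 2 → Set ℝ, (⋃ i, D i) = Set.Icc (0:ℝ) 1 ∧ ∀ i, ContinuousOn f (D i)) ∧
    ∃ g : AddCircle (1:ℝ) → ℝ,
      (∀ x : ℝ, x ∈ Set.Ico (0:ℝ) 1 → g ((x : ℝ) : AddCircle (1:ℝ)) = f x) ∧
      ∀ D₁ D₂ : Set (AddCircle (1:ℝ)), D₁ ∪ D₂ = Set.univ →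
        ¬ ContinuousOn g D₁ ∨ ¬ ContinuousOn g D₂ := by
  set f : ℝ → ℝ := fun x => if Irrational x then x - 1 else if x = 1 then 0 else x
    with hfdef
  have hf : ∀ x : ℝ, f x = if Irrational x then x - 1 else if x = 1 then 0 else x :=
    fun _ => rfl
  constructor
  · -- Part (i): 2-continuity on [0,1]
    refine ⟨![{x : ℝ | ¬ Irrational x} ∩ Ico (0:ℝ) 1,
      {x : ℝ | Irrational x ∨ x = 1} ∩ Icc (0:ℝ) 1], ?_, ?_⟩
    · ext x
      simp only [mem_iUnion, Fin.exists_fin_two, Matrix.cons_val_zero, Matrix.cons_val_one,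
        Matrix.head_cons, mem_inter_iff, mem_setOf_eq, mem_Ico, mem_Icc]
      constructor
      · rintro (⟨_, h0, h1⟩ | ⟨_, h0, h1⟩)
        exacts [⟨h0, h1.le⟩, ⟨h0, h1⟩]
      · rintro ⟨h0, h1⟩
        by_cases hirr : Irrational x
        · exact Or.inr ⟨Or.inl hirr, h0, h1⟩
        · rcases eq_or_lt_of_le h1 with h | h
          · exact Or.inr ⟨Or.inr h, h0, h1⟩
          · exact Or.inl ⟨hirr, h0, h⟩
    · intro i
      fin_cases i
      · simp only [Fin.isValue, Matrix.cons_val_zero]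
        refine ContinuousOn.congr continuousOn_id ?_
        intro x hx
        obtain ⟨hx1, _, hx3⟩ := hx
        rw [hf, if_neg hx1, if_neg (ne_of_lt hx3)]
        rfl
      · simp only [Fin.isValue, Matrix.cons_val_one, Matrix.head_cons]
        refine ContinuousOn.congr (f := fun x : ℝ => x - 1)
          ((continuous_id.sub (continuous_const (y := (1:ℝ)))).continuousOn) ?_
        intro x hx
        obtain ⟨hx1, _⟩ := hx
        rcases hx1 with hirr | heq
        · rw [hf, if_pos hirr]
        · subst heq
          rw [hf, if_neg not_irrational_one, if_pos rfl]
          norm_num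
  · -- Part (ii): lift to the circle
    set g : AddCircle (1:ℝ) → ℝ := AddCircle.liftIco 1 0 f with hgdef
    have hg : ∀ x : ℝ, x ∈ Set.Ico (0:ℝ) 1 → g ((x : ℝ) : AddCircle (1:ℝ)) = f x := by
      intro x hx
      exact AddCircle.liftIco_zero_coe_apply hx
    refine ⟨g, hg, ?_⟩
    intro D₁ D₂ hD
    by_contra hcon
    push_neg at hcon
    obtain ⟨h₁, h₂⟩ := hcon
    -- reduction of the circle coercion to the fractional part
    have hcoe : ∀ x : ℝ, ((Int.fract x : ℝ) : AddCircle (1:ℝ)) = (x : AddCircle (1:ℝ)) := by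
      intro x
      rw [QuotientAddGroup.eq]
      refine AddSubgroup.mem_zmultiples_iff.2 ⟨⌊x⌋, ?_⟩
      rw [zsmul_eq_mul, mul_one]
      rw [Int.fract]
      ring
    -- value formula for the lifted function
    have hFval : ∀ x : ℝ, g ((x : ℝ) : AddCircle (1:ℝ)) = x + (nfun x : ℝ) := by
      intro x
      rw [← hcoe x, hg _ ⟨Int.fract_nonneg x, Int.fract_lt_one x⟩, hf]
      by_cases hirr : Irrational x
      · have h1 : Irrational (Int.fract x) := by
          rw [Int.fract]; exact hirr.sub_intCast _
        rw [if_pos h1]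
        unfold nfun
        rw [if_pos hirr, Int.fract]
        push_cast
        ring
      · have h1 : ¬ Irrational (Int.fract x) := by
          intro h
          rw [Int.fract] at h
          exact hirr (h.of_sub_intCast _)
        rw [if_neg h1, if_neg (ne_of_lt (Int.fract_lt_one x))]
        unfold nfun
        rw [if_neg hirr, Int.fract]
        push_cast
        ring
    -- local constancy of nfun on preimages of the pieces
    have key : ∀ D : Set (AddCircle (1:ℝ)), ContinuousOn g D →
        ∀ x : ℝ, ((x : ℝ) : AddCircle (1:ℝ)) ∈ D → ∃ δ > 0, ∀ y : ℝ,
        ((y : ℝ) : AddCircle (1:ℝ)) ∈ D → |y - x| < δ → nfun y = nfun x := by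
      intro D hgD x hx
      have hmk : Continuous (fun t : ℝ => ((t : ℝ) : AddCircle (1:ℝ))) :=
        AddCircle.continuous_mk' 1
      have hFcont : ContinuousOn (fun t : ℝ => g ((t : ℝ) : AddCircle (1:ℝ)))
          ((fun t : ℝ => ((t : ℝ) : AddCircle (1:ℝ))) ⁻¹' D) :=
        hgD.comp hmk.continuousOn fun y hy => hy
      obtain ⟨δ, hδpos, hδ⟩ := Metric.continuousWithinAt_iff.mp (hFcont x hx)
        (1/2) (by norm_num)
      refine ⟨min δ (1/2), lt_min hδpos (by norm_num), ?_⟩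
      intro y hy hdist
      have hdy : dist y x < δ := by
        rw [Real.dist_eq]; exact lt_of_lt_of_le hdist (min_le_left _ _)
      have h1 := hδ hy hdy
      rw [Real.dist_eq, hFval, hFval] at h1
      have h2 : |y - x| < 1/2 := lt_of_lt_of_le hdist (min_le_right _ _)
      have h3 : |(nfun y : ℝ) - (nfun x : ℝ)| < 1 := by
        have heq : (nfun y : ℝ) - (nfun x : ℝ) =
            (y + (nfun y : ℝ) - (x + (nfun x : ℝ))) - (y - x) := by ring
        rw [heq]
        calc |(y + (nfun y : ℝ) - (x + (nfun x : ℝ))) - (y - x)|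
            ≤ |y + (nfun y : ℝ) - (x + (nfun x : ℝ))| + |y - x| := abs_sub _ _
          _ < 1/2 + 1/2 := add_lt_add h1 h2
          _ = 1 := by norm_num
      have h4 : |nfun y - nfun x| < 1 := by
        have : ((|nfun y - nfun x| : ℤ) : ℝ) < 1 := by
          push_cast
          exact h3
        exact_mod_cast this
      rw [abs_lt] at h4
      omega
    -- the two preimage sets
    set E₁ : Set ℝ := {x : ℝ | ((x : ℝ) : AddCircle (1:ℝ)) ∈ D₁} with hE₁
    set E₂ : Set ℝ := {x : ℝ | ((x : ℝ) : AddCircle (1:ℝ)) ∈ D₂} with hE₂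
    have hcovE : ∀ x : ℝ, x ∈ E₁ ∨ x ∈ E₂ := by
      intro x
      have : ((x : ℝ) : AddCircle (1:ℝ)) ∈ D₁ ∪ D₂ := by
        rw [hD]; exact mem_univ _
      exact this
    have hper₁ : ∀ x : ℝ, x ∈ E₁ → x + 1 ∈ E₁ := by
      intro x hx
      show ((x + 1 : ℝ) : AddCircle (1:ℝ)) ∈ D₁
      rw [AddCircle.coe_add_period]
      exact hx
    have hper₂ : ∀ x : ℝ, x ∈ E₂ → x + 1 ∈ E₂ := by
      intro x hx
      show ((x + 1 : ℝ) : AddCircle (1:ℝ)) ∈ D₂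
      rw [AddCircle.coe_add_period]
      exact hx
    have hloc₁ : ∀ x ∈ E₁, ∃ δ > 0, ∀ y ∈ E₁, |y - x| < δ → nfun y = nfun x :=
      fun x hx => key D₁ h₁ x hx
    have hloc₂ : ∀ x ∈ E₂, ∃ δ > 0, ∀ y ∈ E₂, |y - x| < δ → nfun y = nfun x :=
      fun x hx => key D₂ h₂ x hx
    rcases hcovE (Real.sqrt 2 / 2) with hy | hy
    · exact main_contra E₁ E₂ hcovE hper₁ hloc₁ hloc₂ hy
    · exact main_contra E₂ E₁ (fun x => (hcovE x).symm) hper₂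
        hloc₂ hloc₁ hy
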